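/- Fix integers 1 ≤ ℓ ≤ d and reals b_1 > b_2 > ⋯ > b_d > 0, and let M be an ℓ×d complex matrix. Let I ⊆ {1,…,d} be an ℓ-element subset such that the columns {M^i : i ∈ I} are linearly independent (ω_M(I) ≠ 0) and such that ω_M(J) = 0 for every ℓ-element subset J with p_J > p_I. Then for every j ∈ {1,…,d}∖I and every subset T ⊆ I with at most ℓ−1 elements that contains every element of I smaller than j, the family of columns {M^i : i ∈ T} ∪ {M^j} is linearly dependent. -/

import Mathlib

/-- The minor `ω_M(I)` of an `ℓ×d` matrix `M`: the determinant of the `ℓ×ℓ` submatrix of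
`M` whose columns are those indexed by `I`, taken in increasing order (defined to be `0`
when `I` does not have `ℓ` elements). -/
noncomputable def minorOn {ℓ d : ℕ} (M : Matrix (Fin ℓ) (Fin d) ℂ)
    (I : Finset (Fin d)) : ℂ :=
  if h : I.card = ℓ then
    (M.submatrix id (fun t : Fin ℓ => ((I.orderIsoOfFin h t) : Fin d))).det
  else 0

/-- **Lemma B.5.** Fix `b_1 > ⋯ > b_d > 0` and an `ℓ×d` complex matrix `M`. Let `I` be an
`ℓ`-element subset of `{1,…,d}` whose columns are linearly independent (`ω_M(I) ≠ 0`) and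
such that `ω_M(J) = 0` whenever `p_J > p_I` (with `p_J = ∏_{i∈J} b_i`). Then for every
`j ∉ I` and every `T ⊆ I` with at most `ℓ-1` elements containing all elements of `I`
smaller than `j`, the columns `{M^i : i ∈ T} ∪ {M^j}` are linearly dependent. -/
theorem stmt6 (ℓ d : ℕ) (hℓ1 : 1 ≤ ℓ) (hℓd : ℓ ≤ d)
    (b : Fin d → ℝ) (hb : StrictAnti b) (hbpos : ∀ i, 0 < b i)
    (M : Matrix (Fin ℓ) (Fin d) ℂ)
    (I : Finset (Fin d)) (hI : I.card = ℓ)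
    (hIindep : LinearIndependent ℂ (fun i : {x // x ∈ I} => M.transpose (i : Fin d)))
    (hvanish : ∀ J : Finset (Fin d), J.card = ℓ →
      (∏ i ∈ I, b i) < ∏ i ∈ J, b i → minorOn M J = 0) :
    ∀ j : Fin d, j ∉ I →
      ∀ T : Finset (Fin d), T ⊆ I → T.card ≤ ℓ - 1 →
        (∀ i ∈ I, i < j → i ∈ T) →
        ¬ LinearIndependent ℂ
            (fun i : {x // x ∈ insert j T} => M.transpose (i : Fin d)) := by
    classical
  intro j hjI T hTI hTcard hTlt hli
  set cols : Fin d → (Fin ℓ → ℂ) := fun i => M.transpose i with hcolsdef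
  have hIne : I.Nonempty := Finset.card_pos.mp (by omega)
  haveI : Nonempty {x // x ∈ I} := ⟨⟨hIne.choose, hIne.choose_spec⟩⟩
  have hcard : Fintype.card {x // x ∈ I} = Module.finrank ℂ (Fin ℓ → ℂ) := by
    simp [hI]
  let B := basisOfLinearIndependentOfCardEqFinrank hIindep hcard
  have hB : ∀ i : {x // x ∈ I}, B i = cols i := fun i => by
    simp [B, coe_basisOfLinearIndependentOfCardEqFinrank, hcolsdef]
  set c : Fin d → ℂ := fun i => if h : i ∈ I then B.repr (cols j) ⟨i, h⟩ else 0 with hcdef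
  have hrepr : cols j = ∑ i ∈ I, c i • cols i := by
    have h1 := B.sum_repr (cols j)
    rw [← h1, ← Finset.sum_coe_sort I (fun i => c i • cols i)]
    apply Finset.sum_congr rfl
    intro i _
    simp [hcdef, i.2, hB]
  have hjT : j ∉ T := fun h => hjI (hTI h)
  by_cases hc : ∀ s ∈ I, s ∉ T → c s = 0
  · -- cols j is in the span of the T-columns: contradiction with hli
    have hrepr' : cols j = ∑ i ∈ T, c i • cols i := by
      rw [hrepr]
      exact (Finset.sum_subset hTI (fun x hx hxT => by
        rw [hc x hx hxT, zero_smul])).symm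
    have hsum : ∑ i : {x // x ∈ insert j T},
        (if (i : Fin d) = j then (1:ℂ) else -(c i)) • cols i = 0 := by
      rw [Finset.sum_coe_sort (insert j T)
        (fun i => (if i = j then (1:ℂ) else -(c i)) • cols i),
        Finset.sum_insert hjT, if_pos rfl, one_smul, hrepr', ← Finset.sum_add_distrib]
      apply Finset.sum_eq_zero
      intro i hi
      rw [if_neg (by rintro rfl; exact hjT hi), neg_smul]
      simp
    have := Fintype.linearIndependent_iff.mp hli
      (fun i => if (i : Fin d) = j then (1:ℂ) else -(c i)) hsum
      ⟨j, Finset.mem_insert_self j T⟩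
    simp at this
  · push_neg at hc
    obtain ⟨s, hsI, hsT, hcs⟩ := hc
    have hjs : j < s := by
      rcases lt_trichotomy j s with h | h | h
      · exact h
      · exact absurd (h ▸ hsI) hjI
      · exact absurd (hTlt s hsI h) hsT
    set J := insert j (I.erase s) with hJdef
    have hjJ' : j ∉ I.erase s := fun h => hjI (Finset.mem_of_mem_erase h)
    have hJcard : J.card = ℓ := by
      rw [hJdef, Finset.card_insert_of_notMem hjJ', Finset.card_erase_of_mem hsI, hI]
      omega
    have hprod : (∏ i ∈ I, b i) < ∏ i ∈ J, b i := by
      rw [hJdef, Finset.prod_insert hjJ', ← Finset.mul_prod_erase I b hsI]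
      exact mul_lt_mul_of_pos_right (hb hjs)
        (Finset.prod_pos (fun i _ => hbpos i))
    -- linear independence of the J columns
    have hJindep : LinearIndependent ℂ (fun i : {x // x ∈ J} => cols i) := by
      rw [Fintype.linearIndependent_iff]
      intro g hg
      set G : Fin d → ℂ := fun i => if h : i ∈ J then g ⟨i, h⟩ else 0 with hGdef
      have hGg : ∀ i : {x // x ∈ J}, G i = g i := fun i => by simp [hGdef, i.2]
      have hg' : ∑ i ∈ J, G i • cols i = 0 := by
        rw [← Finset.sum_coe_sort J (fun i => G i • cols i)]
        rw [← hg]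
        exact Finset.sum_congr rfl (fun i _ => by rw [hGg])
      have hjmem : (j : Fin d) ∈ J := Finset.mem_insert_self _ _
      set D : Fin d → ℂ :=
        fun i => G j * c i + (if i ∈ I.erase s then G i else 0) with hDdef
      have hsumI : ∑ i ∈ I, D i • cols i = 0 := by
        have e1 : ∑ i ∈ I, D i • cols i
            = ∑ i ∈ I, (G j * c i) • cols i
              + ∑ i ∈ I, (if i ∈ I.erase s then G i else 0) • cols i := by
          rw [← Finset.sum_add_distrib]
          exact Finset.sum_congr rfl (fun i _ => by rw [hDdef, add_smul])
        have e2 : ∑ i ∈ I, (G j * c i) • cols i = G j • cols j := by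
          rw [hrepr, Finset.smul_sum]
          exact Finset.sum_congr rfl (fun i _ => by rw [mul_smul])
        have e3 : ∑ i ∈ I, (if i ∈ I.erase s then G i else 0) • cols i
            = ∑ i ∈ I.erase s, G i • cols i := by
          rw [← Finset.sum_subset (Finset.erase_subset s I)
            (fun x _ hx => by rw [if_neg hx, zero_smul])]
          exact Finset.sum_congr rfl (fun i hi => by rw [if_pos hi])
        rw [hJdef, Finset.sum_insert hjJ'] at hg'
        rw [e1, e2, e3]
        exact hg'
      have hD0 : ∀ i : {x // x ∈ I}, D i = 0 := by
        apply Fintype.linearIndependent_iff.mp hIindep (fun i => D i)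
        rw [Finset.sum_coe_sort I (fun i => D i • cols i)]
        exact hsumI
      have hGj : G j = 0 := by
        have h1 := hD0 ⟨s, hsI⟩
        have hns : s ∉ I.erase s := fun h => (Finset.mem_erase.mp h).1 rfl
        simp only [hDdef] at h1
        rw [if_neg hns, add_zero] at h1
        exact (mul_eq_zero.mp h1).resolve_right hcs
      intro i
      rw [← hGg]
      rcases Finset.mem_insert.mp i.2 with h | h
      · rw [show (i : Fin d) = j from h]; exact hGj
      · have := hD0 ⟨i, Finset.mem_of_mem_erase h⟩
        simp only [hDdef] at this
        simp only [hGj, zero_mul, zero_add, if_pos h] at this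
        exact this
    -- the minor of J is nonzero, contradicting hvanish
    have hzero := hvanish J hJcard hprod
    rw [minorOn, dif_pos hJcard] at hzero
    set A := M.submatrix id (fun t : Fin ℓ => ((J.orderIsoOfFin hJcard t) : Fin d)) with hA
    have hAcols : LinearIndependent ℂ (fun t : Fin ℓ => A.transpose t) := by
      have : (fun t : Fin ℓ => A.transpose t)
          = fun t => cols ((J.orderIsoOfFin hJcard t) : Fin d) := by
        funext t
        rfl
      rw [this]
      exact hJindep.comp _ (fun a b hab => by
        have := (J.orderIsoOfFin hJcard).injective hab
        exact this)
    have : IsUnit A := Matrix.linearIndependent_cols_iff_isUnit.mp hAcols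
    have hdet : A.det ≠ 0 := by
      have := (Matrix.isUnit_iff_isUnit_det A).mp this
      exact this.ne_zero
    exact hdet hzero
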